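/- arXiv:2412.20174 — 5 statements merged into one kernel-verified Lean document; each statement's English description precedes it below -/
import Mathlib

section
/- Let p be a prime and A a commutative ring in which p² = 0 (i.e., (p·1_A)² = 0). Let σ be a finite index type and F a multivariate polynomial over A in variables indexed by σ. Let a, b : σ → A be tuples and assume that for every i ∈ σ the value (∂F/∂xᵢ)(a) lies in the ideal p·A. Then F(a + p·b) = F(a); that is, the evaluation of F at the tuple (aᵢ + p·bᵢ)ᵢ equals the evaluation of F at a. -/
open MvPolynomial

lemma mvPoly_taylor_aux (p : ℕ) (A : Type*) [CommRing A] (hp2 : (p : A) ^ 2 = 0)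
    (σ : Type*) [Fintype σ] (a b : σ → A) (F : MvPolynomial σ A) :
    eval (fun i => a i + (p : A) * b i) F
      = eval a F + ∑ i, (p : A) * b i * eval a (pderiv i F) := by
  classical
  induction F using MvPolynomial.induction_on with
  | C c => simp [pderiv_C]
  | add f g hf hg =>
      simp only [map_add, hf, hg, mul_add, Finset.sum_add_distrib]
      ring
  | mul_X f j hf =>
      have hsingle : ∀ i : σ, eval a (pderiv i (X j : MvPolynomial σ A))
          = if i = j then 1 else 0 := by
        intro i
        rcases eq_or_ne i j with rfl | h
        · simp
        · simp [pderiv_X_of_ne h.symm, h]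
      have hSp : (∑ i, (p : A) * b i * eval a (pderiv i f)) * ((p : A) * b j) = 0 := by
        rw [Finset.sum_mul]
        refine Finset.sum_eq_zero fun i _ => ?_
        have : (p : A) * b i * eval a (pderiv i f) * ((p : A) * b j)
            = (p : A) ^ 2 * (b i * eval a (pderiv i f) * b j) := by ring
        rw [this, hp2, zero_mul]
      have hsum : ∑ i, (p : A) * b i * eval a (pderiv i (f * X j))
          = (∑ i, (p : A) * b i * eval a (pderiv i f)) * a j
            + (p : A) * b j * eval a f := by
        have : ∀ i : σ, (p : A) * b i * eval a (pderiv i (f * X j))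
            = (p : A) * b i * eval a (pderiv i f) * a j
              + (if i = j then (p : A) * b j * eval a f else 0) := by
          intro i
          rw [pderiv_mul, map_add, eval_mul, eval_mul, hsingle, eval_X]
          rcases eq_or_ne i j with rfl | h
          · simp; ring
          · simp [h]; ring
        rw [Finset.sum_congr rfl fun i _ => this i, Finset.sum_add_distrib,
          Finset.sum_ite_eq' Finset.univ j, ← Finset.sum_mul]
        simp
      rw [map_mul, map_mul, hf, eval_X, eval_X, hsum]
      have : (eval a f + ∑ i, (p : A) * b i * eval a (pderiv i f)) * (a j + (p : A) * b j)
          = eval a f * a j + eval a f * ((p : A) * b j)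
            + (∑ i, (p : A) * b i * eval a (pderiv i f)) * a j
            + (∑ i, (p : A) * b i * eval a (pderiv i f)) * ((p : A) * b j) := by ring
      rw [this, hSp]
      ring

/-- If `p² = 0` in `A` and all partial derivatives of `F` at `a` lie in the ideal `pA`,
then `F(a + p·b) = F(a)`. -/
theorem mvPolynomial_eval_indep_of_pderiv_mem (p : ℕ) (hp : p.Prime) (A : Type*) [CommRing A]
    (hp2 : (p : A) ^ 2 = 0) (σ : Type*) [Fintype σ] (F : MvPolynomial σ A) (a b : σ → A)
    (hder : ∀ i : σ, eval a (pderiv i F) ∈ Ideal.span {(p : A)}) :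
    eval (fun i => a i + (p : A) * b i) F = eval a F := by
  rw [mvPoly_taylor_aux p A hp2 σ a b F]
  have : ∀ i ∈ Finset.univ, (p : A) * b i * eval a (pderiv i F) = 0 := by
    intro i _
    obtain ⟨c, hc⟩ := Ideal.mem_span_singleton'.mp (hder i)
    rw [← hc]
    have : (p : A) * b i * (c * (p : A)) = (p : A) ^ 2 * (b i * c) := by ring
    rw [this, hp2, zero_mul]
  rw [Finset.sum_congr rfl this]
  simp
end

section
/- Let p be a prime and A a commutative ring in which p² = 0 (i.e., (p·1_A)² = 0). Let σ be a finite index type and F a multivariate polynomial over A in variables indexed by σ. Let a : σ → A be a tuple such that F(a) lies in the ideal p·A, and suppose there exists an index i₀ ∈ σ such that (∂F/∂xᵢ₀)(a) is a unit of A. Then there exists a tuple b : σ → A such that F(a + p·b) = 0, where F(a + p·b) denotes the evaluation of F at the tuple (aᵢ + p·bᵢ)ᵢ. -/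
open MvPolynomial

lemma mv_eval_add_of_mul_eq_zero {A : Type*} [CommRing A] {σ : Type*} [Fintype σ]
    (F : MvPolynomial σ A) (a y : σ → A) (hy : ∀ i j, y i * y j = 0) :
    eval (fun i => a i + y i) F = eval a F + ∑ i, y i * eval a (pderiv i F) := by
  classical
  induction F using MvPolynomial.induction_on with
  | C c => simp
  | add f g hf hg =>
      simp only [map_add, hf, hg, Finset.sum_add_distrib, mul_add]; ring
  | mul_X f n hf =>
      have hS : (∑ i, y i * eval a (pderiv i f)) * y n = 0 := by
        rw [Finset.sum_mul]
        refine Finset.sum_eq_zero fun i _ => ?_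
        calc y i * eval a (pderiv i f) * y n
            = (y i * y n) * eval a (pderiv i f) := by ring
          _ = 0 := by rw [hy, zero_mul]
      have key : ∀ i, y i * eval a (pderiv i (f * X n))
          = y i * (eval a (pderiv i f) * a n) + (if i = n then y n * eval a f else 0) := by
        intro i
        rw [pderiv_mul, pderiv_X]
        by_cases h : i = n
        · subst h; simp [Pi.single_apply]; ring
        · simp [Pi.single_apply, h]
      rw [map_mul, eval_X, map_mul, eval_X, hf]
      simp only [key, Finset.sum_add_distrib, Finset.sum_ite_eq', Finset.mem_univ, if_true]
      have expand : (eval a f + ∑ i, y i * eval a (pderiv i f)) * (a n + y n)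
          = eval a f * a n + y n * eval a f + (∑ i, y i * eval a (pderiv i f)) * a n
            + (∑ i, y i * eval a (pderiv i f)) * y n := by ring
      rw [expand, hS, add_zero, Finset.sum_mul]
      simp only [mul_assoc]
      ring

/-- A Hensel-type statement: if `p² = 0` in `A`, `F(a) ∈ pA`, and some partial derivative
of `F` at `a` is a unit, then there is a tuple `b` with `F(a + p·b) = 0`. -/
theorem mvPolynomial_exists_root_of_unit_pderiv (p : ℕ) (hp : p.Prime) (A : Type*) [CommRing A]
    (hp2 : (p : A) ^ 2 = 0) (σ : Type*) [Fintype σ] (F : MvPolynomial σ A) (a : σ → A)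
    (hFa : eval a F ∈ Ideal.span {(p : A)})
    (hunit : ∃ i₀ : σ, IsUnit (eval a (pderiv i₀ F))) :
    ∃ b : σ → A, eval (fun i => a i + (p : A) * b i) F = 0 := by
  classical
  obtain ⟨i₀, u, hu⟩ := hunit
  obtain ⟨c, hc⟩ := Ideal.mem_span_singleton'.mp hFa
  set b : σ → A := fun i => if i = i₀ then -(↑u⁻¹ * c) else 0 with hb
  refine ⟨b, ?_⟩
  have hy : ∀ i j, ((p : A) * b i) * ((p : A) * b j) = 0 := by
    intro i j
    calc ((p : A) * b i) * ((p : A) * b j) = (p : A) ^ 2 * (b i * b j) := by ring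
      _ = 0 := by rw [hp2, zero_mul]
  rw [mv_eval_add_of_mul_eq_zero F a _ hy]
  have hsum : ∑ i, ((p : A) * b i) * eval a (pderiv i F)
      = (p : A) * -(↑u⁻¹ * c) * eval a (pderiv i₀ F) := by
    rw [Finset.sum_eq_single i₀]
    · simp [hb]
    · intro i _ hi; simp [hb, hi]
    · intro h; exact absurd (Finset.mem_univ i₀) h
  rw [hsum, ← hu]
  have huu : (↑u⁻¹ : A) * ↑u = 1 := u.inv_mul
  calc eval a F + (p:A) * -(↑u⁻¹ * c) * ↑u
      = eval a F - (↑u⁻¹ * ↑u) * (c * (p:A)) := by ring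
    _ = eval a F - 1 * eval a F := by rw [huu, hc]
    _ = 0 := by ring
end

section
/- Let p be a prime and B a commutative ring in which p² = 0 (i.e., (p·1_B)² = 0). Let q : B → B/pB denote the quotient map modulo the principal ideal pB generated by p·1_B. Let I be an ideal of B, let I₀ denote the image ideal q(I) in B/pB, and suppose: (i) there exists G ∈ I such that I₀ is the principal ideal generated by q(G), and (ii) for every x ∈ B, if p·x ∈ I then q(x) ∈ I₀. Then I is the principal ideal of B generated by G. -/
/-- If `p² = 0` in `B`, `I` is an ideal of `B` whose image `I₀` in `B/pB` is generated by
the image of some `G ∈ I`, and `p·x ∈ I` implies that `x mod p` lies in `I₀`, then `I` is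
generated by `G`. -/
theorem ideal_principal_of_mod_p_principal (p : ℕ) (hp : p.Prime) (B : Type*) [CommRing B]
    (hp2 : (p : B) ^ 2 = 0) (I : Ideal B) (G : B) (hG : G ∈ I)
    (hgen : Ideal.map (Ideal.Quotient.mk (Ideal.span {(p : B)})) I =
      Ideal.span {Ideal.Quotient.mk (Ideal.span {(p : B)}) G})
    (hsat : ∀ x : B, (p : B) * x ∈ I →
      Ideal.Quotient.mk (Ideal.span {(p : B)}) x ∈
        Ideal.map (Ideal.Quotient.mk (Ideal.span {(p : B)})) I) :
    I = Ideal.span {G} := by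
  set q := Ideal.Quotient.mk (Ideal.span {(p : B)}) with hq
  -- helper: membership in I₀ gives decomposition a = G*b + p*c
  have key : ∀ a : B, q a ∈ Ideal.span {q G} → ∃ b c : B, a = G * b + (p : B) * c := by
    intro a ha
    rw [Ideal.mem_span_singleton] at ha
    obtain ⟨y, hy⟩ := ha
    obtain ⟨b, rfl⟩ := Ideal.Quotient.mk_surjective y
    have : q (a - G * b) = 0 := by
      rw [map_sub, map_mul, hy, sub_self]
    rw [Ideal.Quotient.eq_zero_iff_mem, Ideal.mem_span_singleton] at this
    obtain ⟨c, hc⟩ := this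
    exact ⟨b, c, by linear_combination hc⟩
  apply le_antisymm
  · intro a haI
    have h1 : q a ∈ Ideal.span {q G} := by
      rw [← hgen]; exact Ideal.mem_map_of_mem _ haI
    obtain ⟨b, c, hbc⟩ := key a h1
    have hpc : (p : B) * c ∈ I := by
      have : (p : B) * c = a - G * b := by linear_combination -hbc
      rw [this]
      exact I.sub_mem haI (I.mul_mem_right b hG)
    have h2 := hsat c hpc
    rw [hgen] at h2
    obtain ⟨d, e, hde⟩ := key c h2
    rw [Ideal.mem_span_singleton]
    refine ⟨b + (p : B) * d, ?_⟩
    have : (p : B) * ((p : B) * e) = 0 := by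
      rw [← mul_assoc, ← sq, hp2, zero_mul]
    calc a = G * b + (p : B) * (G * d + (p : B) * e) := by rw [← hde, hbc]
      _ = G * (b + (p : B) * d) + (p : B) * ((p : B) * e) := by ring
      _ = G * (b + (p : B) * d) := by rw [this, add_zero]
  · rw [Ideal.span_le, Set.singleton_subset_iff]; exact hG
end

section
/- Let p be a prime and k a perfect field of characteristic p, and let W₂(k) be the ring of length-2 p-typical truncated Witt vectors over k. Let σ be a finite index type and F a multivariate polynomial over W₂(k) in variables indexed by σ. Let a₀, a₁ : σ → k be tuples, write a := ((a₀(j), 0))_{j ∈ σ} for the tuple of truncated Witt vectors with second coefficient zero, and assume that for every i ∈ σ the value (∂F/∂xᵢ)(a) lies in the ideal p·W₂(k). Then F evaluated at the tuple ((a₀(j), a₁(j)))_{j ∈ σ} equals F evaluated at a; that is, the value of F is independent of the second Witt coefficients of the arguments. -/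
open MvPolynomial

section Taylor

variable {R : Type*} [CommRing R] {σ : Type*} [Fintype σ]

lemma eval_add_of_mul_eq_zero (F : MvPolynomial σ R) (x ε : σ → R)
    (h : ∀ i j : σ, ε i * ε j = 0) :
    eval (fun j => x j + ε j) F = eval x F + ∑ i, eval x (pderiv i F) * ε i := by
  classical
  induction F using MvPolynomial.induction_on with
  | C a => simp
  | add f g hf hg =>
      simp [hf, hg, add_mul, Finset.sum_add_distrib]
      ring
  | mul_X f i hf =>
      have hS : (∑ j, eval x (pderiv j f) * ε j) * ε i = 0 := by
        rw [Finset.sum_mul]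
        exact Finset.sum_eq_zero fun j _ => by rw [mul_assoc, h j i, mul_zero]
      have hsum : ∀ j : σ, eval x (pderiv j (f * X i)) * ε j =
          eval x (pderiv j f) * x i * ε j + (if j = i then eval x f * ε j else 0) := by
        intro j
        rw [pderiv_mul, pderiv_X]
        by_cases hji : j = i
        · subst hji; simp; ring
        · simp [hji, Pi.single_apply]
      calc eval (fun j => x j + ε j) (f * X i)
          = (eval x f + ∑ j, eval x (pderiv j f) * ε j) * (x i + ε i) := by
            rw [eval_mul, hf, eval_X]
        _ = eval x f * x i + ((∑ j, eval x (pderiv j f) * ε j) * x i + eval x f * ε i)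
              + (∑ j, eval x (pderiv j f) * ε j) * ε i := by ring
        _ = eval x (f * X i) + ∑ j, eval x (pderiv j (f * X i)) * ε j := by
            have hsum2 : ∑ j, eval x (pderiv j (f * X i)) * ε j =
                (∑ j, eval x (pderiv j f) * ε j) * x i + eval x f * ε i := by
              rw [Finset.sum_congr rfl fun j _ => hsum j, Finset.sum_add_distrib,
                Finset.sum_ite_eq' Finset.univ i (fun j => eval x f * ε j)]
              have h1 : ∀ j : σ, eval x (pderiv j f) * x i * ε j =
                  eval x (pderiv j f) * ε j * x i := fun j => by ring
              rw [Finset.sum_congr rfl fun j _ => h1 j, ← Finset.sum_mul]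
              simp
            rw [hS, add_zero, eval_mul, eval_X, hsum2]

end Taylor

section Witt

variable (p : ℕ) [hp : Fact p.Prime] {k : Type*} [CommRing k] [CharP k p]

/-- Any truncated Witt vector of length 2 with vanishing zeroth coefficient comes from
a Verschiebung. -/
lemma exists_verschiebung (t : TruncatedWittVector p 2 k) (ht : t.coeff 0 = 0) :
    ∃ z : WittVector p k, WittVector.truncate 2 (WittVector.verschiebung z) = t := by
  refine ⟨WittVector.mk p (fun n => if n = 0 then t.coeff 1 else 0), ?_⟩
  apply TruncatedWittVector.ext
  intro i
  fin_cases i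
  · rw [WittVector.coeff_truncate]
    simpa using ht.symm
  · rw [WittVector.coeff_truncate]
    show (WittVector.verschiebung _).coeff (Nat.succ 0) = _
    rw [WittVector.verschiebung_coeff_succ, WittVector.coeff_mk]
    simp

lemma mul_eq_zero_of_coeff_zero (t u : TruncatedWittVector p 2 k)
    (ht : t.coeff 0 = 0) (hu : u.coeff 0 = 0) : t * u = 0 := by
  obtain ⟨z, rfl⟩ := exists_verschiebung p t ht
  obtain ⟨w, rfl⟩ := exists_verschiebung p u hu
  rw [← map_mul]
  have : WittVector.verschiebung z * WittVector.verschiebung w =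
      WittVector.verschiebung (WittVector.verschiebung
        (WittVector.frobenius z * WittVector.frobenius w)) := by
    simpa using WittVector.iterate_verschiebung_mul z w 1 1
  rw [this]
  apply TruncatedWittVector.ext
  intro i
  rw [WittVector.coeff_truncate]
  fin_cases i
  · simpa using WittVector.verschiebung_coeff_zero _
  · show (WittVector.verschiebung _).coeff (Nat.succ 0) = _
    rw [WittVector.verschiebung_coeff_succ, WittVector.verschiebung_coeff_zero]
    simp

lemma p_mul_eq_zero_of_coeff_zero (t : TruncatedWittVector p 2 k)
    (ht : t.coeff 0 = 0) : (p : TruncatedWittVector p 2 k) * t = 0 := by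
  obtain ⟨z, rfl⟩ := exists_verschiebung p t ht
  have hp' : (p : TruncatedWittVector p 2 k) = WittVector.truncate 2 (p : WittVector p k) := by
    rw [map_natCast]
  rw [hp', ← map_mul]
  have : (p : WittVector p k) * WittVector.verschiebung z =
      WittVector.verschiebung (WittVector.frobenius (WittVector.verschiebung z)) := by
    rw [mul_comm, ← WittVector.verschiebung_frobenius]
  rw [this]
  apply TruncatedWittVector.ext
  intro i
  rw [WittVector.coeff_truncate]
  fin_cases i
  · simpa using WittVector.verschiebung_coeff_zero _
  · show (WittVector.verschiebung _).coeff (Nat.succ 0) = _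
    rw [WittVector.verschiebung_coeff_succ, WittVector.coeff_frobenius_charP,
      WittVector.verschiebung_coeff_zero, zero_pow hp.out.ne_zero]
    simp

lemma sub_coeff_zero (t u : TruncatedWittVector p 2 k) :
    (t - u).coeff 0 = t.coeff 0 - u.coeff 0 := by
  obtain ⟨x, rfl⟩ := WittVector.truncate_surjective p 2 k t
  obtain ⟨y, rfl⟩ := WittVector.truncate_surjective p 2 k u
  rw [← map_sub, WittVector.coeff_truncate, WittVector.coeff_truncate,
    WittVector.coeff_truncate]
  show WittVector.constantCoeff (x - y) = _
  rw [map_sub]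
  rfl

end Witt

/-- Over `W₂(k)` for a perfect field `k` of characteristic `p`: if all partial derivatives
of `F` at `a = ((a₀ j, 0))ⱼ` lie in the ideal `p·W₂(k)`, then the value of `F` at
`((a₀ j, a₁ j))ⱼ` is independent of the second Witt coefficients `a₁`. -/
theorem wittVector2_eval_indep_of_pderiv_mem (p : ℕ) [Fact p.Prime] (k : Type*) [Field k]
    [CharP k p] [PerfectRing k p] (σ : Type*) [Fintype σ]
    (F : MvPolynomial σ (TruncatedWittVector p 2 k)) (a₀ a₁ : σ → k)
    (hder : ∀ i : σ,
      eval (fun j => (TruncatedWittVector.mk p ![a₀ j, 0] : TruncatedWittVector p 2 k))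
          (pderiv i F) ∈ Ideal.span {(p : TruncatedWittVector p 2 k)}) :
    eval (fun j => (TruncatedWittVector.mk p ![a₀ j, a₁ j] : TruncatedWittVector p 2 k)) F =
      eval (fun j => (TruncatedWittVector.mk p ![a₀ j, 0] : TruncatedWittVector p 2 k)) F := by
  set x : σ → TruncatedWittVector p 2 k := fun j => TruncatedWittVector.mk p ![a₀ j, 0] with hx
  set ε : σ → TruncatedWittVector p 2 k :=
    fun j => TruncatedWittVector.mk p ![a₀ j, a₁ j] - TruncatedWittVector.mk p ![a₀ j, 0] with hε
  have hε0 : ∀ j, (ε j).coeff 0 = 0 := by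
    intro j
    rw [hε, sub_coeff_zero, TruncatedWittVector.coeff_mk, TruncatedWittVector.coeff_mk]
    simp
  have hεmul : ∀ i j, ε i * ε j = 0 := fun i j =>
    mul_eq_zero_of_coeff_zero p _ _ (hε0 i) (hε0 j)
  have key : (fun j => (TruncatedWittVector.mk p ![a₀ j, a₁ j] : TruncatedWittVector p 2 k)) =
      fun j => x j + ε j := by
    funext j; rw [hε]; ring
  rw [key, eval_add_of_mul_eq_zero F x ε hεmul]
  have hzero : ∀ i : σ, eval x (pderiv i F) * ε i = 0 := by
    intro i
    obtain ⟨c, hc⟩ := Ideal.mem_span_singleton'.mp (hder i)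
    rw [← hc, mul_assoc, p_mul_eq_zero_of_coeff_zero p _ (hε0 i), mul_zero]
  rw [Finset.sum_eq_zero fun i _ => hzero i, add_zero]
end

section
/- Let p be a prime and let e be a multivariate polynomial over ℤ in three variables x, y, z. Write f for the substitution sending (x, y, z) to (x^p, y^p, z^p), and let d be a polynomial satisfying e(f) − e^p = p·d in ℤ[x,y,z]. Then for any triple f' = (f'₁, f'₂, f'₃) of polynomials in ℤ[x,y,z] and any polynomial c ∈ ℤ[x,y,z], the following are equivalent: (i) p² divides e(f + p·f') − e^p − p·c·e in ℤ[x,y,z], where e(f + p·f') is the polynomial obtained from e by substituting x^p + p·f'₁, y^p + p·f'₂, z^p + p·f'₃ for x, y, z respectively; (ii) p divides d + (∂e/∂x)(f)·f'₁ + (∂e/∂y)(f)·f'₂ + (∂e/∂z)(f)·f'₃ − c·e in ℤ[x,y,z], where (∂e/∂x)(f) denotes the partial derivative of e with respect to x with x^p, y^p, z^p substituted for x, y, z, and similarly for the other partial derivatives. -/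
open MvPolynomial

lemma taylor_aux (t : MvPolynomial (Fin 3) ℤ) (g f' : Fin 3 → MvPolynomial (Fin 3) ℤ)
    (e : MvPolynomial (Fin 3) ℤ) :
    ∃ k : MvPolynomial (Fin 3) ℤ,
      aeval (fun i => g i + t * f' i) e =
        aeval g e + t * ∑ i : Fin 3, aeval g (pderiv i e) * f' i + t ^ 2 * k := by
  induction e using MvPolynomial.induction_on with
  | C a => exact ⟨0, by simp⟩
  | add q r hq hr =>
    obtain ⟨kq, hkq⟩ := hq
    obtain ⟨kr, hkr⟩ := hr
    refine ⟨kq + kr, ?_⟩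
    simp only [map_add, hkq, hkr, add_mul, Finset.sum_add_distrib, mul_add]
    ring
  | mul_X q n hq =>
    obtain ⟨k, hk⟩ := hq
    refine ⟨k * g n + (∑ i : Fin 3, aeval g (pderiv i q) * f' i) * f' n + t * k * f' n, ?_⟩
    have hsum : ∀ i : Fin 3, aeval g (pderiv i (q * X n)) =
        aeval g (pderiv i q) * g n + aeval g q * (if n = i then 1 else 0) := by
      intro i
      simp only [pderiv_mul, pderiv_X, Pi.single_apply, map_add, map_mul, aeval_X]
      split_ifs <;> simp
    have hS : ∑ i : Fin 3, aeval g (pderiv i (q * X n)) * f' i =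
        (∑ i : Fin 3, aeval g (pderiv i q) * f' i) * g n + aeval g q * f' n := by
      simp only [hsum, add_mul]
      rw [Finset.sum_add_distrib]
      congr 1
      · rw [Finset.sum_mul]
        exact Finset.sum_congr rfl fun i _ => by ring
      · simp [mul_ite, ite_mul, Finset.sum_ite_eq]
    simp only [map_mul, hk, aeval_X, hS]
    ring

/-- Criterion for lifting Frobenius modulo `p²`: with `e ∈ ℤ[x,y,z]`,
`f = (x^p, y^p, z^p)` and `d` with `e(f) - e^p = p·d`, a triple `f' = (f'₁, f'₂, f'₃)` and
a polynomial `c` satisfy `p² ∣ e(f + p·f') - e^p - p·c·e` if and only if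
`p ∣ d + (∇e)(f)·f' - c·e`. -/
theorem frobenius_lift_criterion (p : ℕ) (hp : p.Prime) (e : MvPolynomial (Fin 3) ℤ)
    (d : MvPolynomial (Fin 3) ℤ)
    (hd : aeval (fun i => (X i : MvPolynomial (Fin 3) ℤ) ^ p) e - e ^ p =
      (p : MvPolynomial (Fin 3) ℤ) * d)
    (f' : Fin 3 → MvPolynomial (Fin 3) ℤ) (c : MvPolynomial (Fin 3) ℤ) :
    (p : MvPolynomial (Fin 3) ℤ) ^ 2 ∣
        aeval (fun i => (X i : MvPolynomial (Fin 3) ℤ) ^ p +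
            (p : MvPolynomial (Fin 3) ℤ) * f' i) e -
          e ^ p - (p : MvPolynomial (Fin 3) ℤ) * c * e ↔
      (p : MvPolynomial (Fin 3) ℤ) ∣
        d + ∑ i : Fin 3,
            aeval (fun j => (X j : MvPolynomial (Fin 3) ℤ) ^ p) (pderiv i e) * f' i -
          c * e := by
  obtain ⟨k, hk⟩ := taylor_aux (p : MvPolynomial (Fin 3) ℤ)
    (fun i => (X i : MvPolynomial (Fin 3) ℤ) ^ p) f' e
  have hp0 : (p : MvPolynomial (Fin 3) ℤ) ≠ 0 := by
    exact_mod_cast Nat.cast_ne_zero.mpr hp.ne_zero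
  have key : aeval (fun i => (X i : MvPolynomial (Fin 3) ℤ) ^ p +
        (p : MvPolynomial (Fin 3) ℤ) * f' i) e -
      e ^ p - (p : MvPolynomial (Fin 3) ℤ) * c * e =
      (p : MvPolynomial (Fin 3) ℤ) *
        (d + ∑ i : Fin 3,
            aeval (fun j => (X j : MvPolynomial (Fin 3) ℤ) ^ p) (pderiv i e) * f' i - c * e) +
        (p : MvPolynomial (Fin 3) ℤ) ^ 2 * k := by
    linear_combination hk + hd
  rw [key]
  rw [dvd_add_left (dvd_mul_right _ k)]
  rw [sq, mul_dvd_mul_iff_left hp0]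
end
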